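/- Let d ≥ 1, let (H, d_H) be a metric space and let i : H → AdS^{d+1} be a spacelike immersion. Define π : AdS^{d+1} → S^d_+ by π(v) = (1, v₁, …, v_d)/√(1 + v₁² + ⋯ + v_d²) (so that π(Φ(θ, x)) = x for all θ ∈ ℝ, x ∈ S^d_+). Then the map p ↦ π(i(p)) from H to S^d_+ ⊂ ℝ^{d+1} is locally bi-Lipschitz: every point of H has a neighbourhood U and constants 0 < k ≤ K such that k·d_H(p, p') ≤ ‖π(i(p)) − π(i(p'))‖ ≤ K·d_H(p, p') for all p, p' ∈ U. -/

import Mathlib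

noncomputable section

/-- The coefficient of the signature-(d,2) quadratic form: +1 on the first `d`
coordinates, −1 on the last two. -/
def eps (d : ℕ) (i : Fin (d + 2)) : ℝ := if (i : ℕ) < d then 1 else -1

/-- The bilinear form ⟨·,·⟩ of signature (d,2) on ℝ^{d+2}. -/
def bil (d : ℕ) (x y : EuclideanSpace ℝ (Fin (d + 2))) : ℝ := ∑ i, eps d i * x i * y i

/-- The quadratic form q of signature (d,2). -/
def quad (d : ℕ) (x : EuclideanSpace ℝ (Fin (d + 2))) : ℝ := bil d x x
/-- The open upper hemisphere S^d_+ ⊂ ℝ^{d+1}. -/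
def SdPlus (d : ℕ) : Set (EuclideanSpace ℝ (Fin (d + 1))) := {x | ‖x‖ = 1 ∧ 0 < x 0}

/-- The map Φ(θ, x) = (x₁/x₀, …, x_d/x₀, cos θ/x₀, sin θ/x₀). -/
def Phi (d : ℕ) (θ : ℝ) (x : EuclideanSpace ℝ (Fin (d + 1))) :
    EuclideanSpace ℝ (Fin (d + 2)) :=
  WithLp.toLp 2 fun i => if h : (i : ℕ) < d then x ⟨(i : ℕ) + 1, by omega⟩ / x 0
    else if (i : ℕ) = d then Real.cos θ / x 0 else Real.sin θ / x 0
/-- A spacelike immersion from a metric space into AdS^{d+1} = {q = −1}: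
a locally Lipschitz map such that, locally, ⟨i(p), i(p')⟩ ≤ −1 − c·d(p,p')². -/
def IsSpacelikeImmersion {H : Type*} [MetricSpace H] (d : ℕ)
    (i : H → EuclideanSpace ℝ (Fin (d + 2))) : Prop :=
  LocallyLipschitz i ∧
  ∀ p : H, ∃ U ∈ nhds p, ∃ c : ℝ, 0 < c ∧
    ∀ p' ∈ U, ∀ p'' ∈ U, bil d (i p') (i p'') ≤ -1 - c * dist p' p'' ^ 2

/-- The projection π : AdS^{d+1} → S^d_+, v ↦ (1, v₁, …, v_d)/√(1 + v₁² + ⋯ + v_d²),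
inverse to x ↦ Φ(θ, x) on each slice. -/
def projSd (d : ℕ) (v : EuclideanSpace ℝ (Fin (d + 2))) :
    EuclideanSpace ℝ (Fin (d + 1)) :=
  WithLp.toLp 2 fun i => (if (i : ℕ) = 0 then 1 else v ⟨(i : ℕ) - 1, by have := i.isLt; omega⟩) /
    Real.sqrt (1 + ∑ j : Fin d, v ⟨(j : ℕ), by have := j.isLt; omega⟩ ^ 2)

namespace AdSAux

variable {d : ℕ}

/-- sum of squares of first d coordinates -/
def Sv (d : ℕ) (v : EuclideanSpace ℝ (Fin (d + 2))) : ℝ :=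
  ∑ j : Fin d, v ⟨(j : ℕ), by have := j.isLt; omega⟩ ^ 2

def Nv (d : ℕ) (v : EuclideanSpace ℝ (Fin (d + 2))) : ℝ := Real.sqrt (1 + Sv d v)

def avec (d : ℕ) (v : EuclideanSpace ℝ (Fin (d + 2))) (i : Fin (d + 1)) : ℝ :=
  if (i : ℕ) = 0 then 1 else v ⟨(i : ℕ) - 1, by have := i.isLt; omega⟩

def Dv (d : ℕ) (v w : EuclideanSpace ℝ (Fin (d + 2))) : ℝ :=
  ∑ j : Fin d, v ⟨(j : ℕ), by have := j.isLt; omega⟩ * w ⟨(j : ℕ), by have := j.isLt; omega⟩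

lemma Sv_nonneg (v : EuclideanSpace ℝ (Fin (d + 2))) : 0 ≤ Sv d v :=
  Finset.sum_nonneg fun _ _ => sq_nonneg _

lemma one_le_Nv (v : EuclideanSpace ℝ (Fin (d + 2))) : 1 ≤ Nv d v := by
  rw [Nv]
  have h := Real.sqrt_le_sqrt (show (1:ℝ) ≤ 1 + Sv d v by linarith [Sv_nonneg (d := d) v])
  simpa using h

lemma Nv_pos (v : EuclideanSpace ℝ (Fin (d + 2))) : 0 < Nv d v :=
  lt_of_lt_of_le one_pos (one_le_Nv v)

lemma Nv_sq (v : EuclideanSpace ℝ (Fin (d + 2))) : Nv d v ^ 2 = 1 + Sv d v :=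
  Real.sq_sqrt (by linarith [Sv_nonneg (d := d) v])

lemma projSd_apply (v : EuclideanSpace ℝ (Fin (d + 2))) (i : Fin (d + 1)) :
    projSd d v i = avec d v i / Nv d v := rfl


lemma Dv_self (v : EuclideanSpace ℝ (Fin (d + 2))) : Dv d v v = Sv d v :=
  Finset.sum_congr rfl fun j _ => (sq _).symm

lemma sum_avec_mul (v w : EuclideanSpace ℝ (Fin (d + 2))) :
    ∑ i : Fin (d + 1), avec d v i * avec d w i = 1 + Dv d v w := by
  rw [Fin.sum_univ_succ]
  simp only [avec, Dv, Fin.val_zero, Fin.val_succ]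
  norm_num

lemma sum_proj_mul (v w : EuclideanSpace ℝ (Fin (d + 2))) :
    ∑ i : Fin (d + 1), projSd d v i * projSd d w i
      = (1 + Dv d v w) / (Nv d v * Nv d w) := by
  have h : ∀ i : Fin (d + 1), projSd d v i * projSd d w i
      = avec d v i * avec d w i / (Nv d v * Nv d w) := by
    intro i
    rw [projSd_apply, projSd_apply, div_mul_div_comm]
  rw [Finset.sum_congr rfl fun i _ => h i, ← Finset.sum_div, sum_avec_mul]

lemma sum_proj_sq (v : EuclideanSpace ℝ (Fin (d + 2))) :
    ∑ i : Fin (d + 1), projSd d v i ^ 2 = 1 := by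
  have h := sum_proj_mul (d := d) v v
  simp only [Dv_self] at h
  have h2 : ∀ i : Fin (d+1), projSd d v i * projSd d v i = projSd d v i ^ 2 :=
    fun i => (sq _).symm
  rw [← Finset.sum_congr rfl fun i _ => h2 i, h, ← Nv_sq, sq,
    div_self (mul_pos (Nv_pos v) (Nv_pos v)).ne']

lemma norm_sq_eq_sum (x : EuclideanSpace ℝ (Fin (d + 1))) :
    ‖x‖ ^ 2 = ∑ i, x i ^ 2 := by
  rw [EuclideanSpace.norm_eq, Real.sq_sqrt (by positivity)]
  exact Finset.sum_congr rfl fun i _ => by rw [Real.norm_eq_abs, sq_abs]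

lemma norm_sub_sq_formula (v w : EuclideanSpace ℝ (Fin (d + 2))) :
    ‖projSd d v - projSd d w‖ ^ 2
      = 2 - 2 * ((1 + Dv d v w) / (Nv d v * Nv d w)) := by
  have h1 : ‖projSd d v - projSd d w‖ ^ 2 = ∑ i, (projSd d v i - projSd d w i) ^ 2 := by
    rw [norm_sq_eq_sum]
    exact Finset.sum_congr rfl fun i _ => by simp
  rw [h1]
  have h2 : ∀ i : Fin (d+1), (projSd d v i - projSd d w i) ^ 2
      = projSd d v i ^ 2 + projSd d w i ^ 2 - 2 * (projSd d v i * projSd d w i) :=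
    fun i => by ring
  rw [Finset.sum_congr rfl fun i _ => h2 i, Finset.sum_sub_distrib,
    Finset.sum_add_distrib, ← Finset.mul_sum, sum_proj_sq, sum_proj_sq, sum_proj_mul]
  ring


lemma bil_eq (v w : EuclideanSpace ℝ (Fin (d + 2))) :
    bil d v w = Dv d v w - v ⟨d, by omega⟩ * w ⟨d, by omega⟩
      - v ⟨d + 1, by omega⟩ * w ⟨d + 1, by omega⟩ := by
  rw [bil, Fin.sum_univ_castSucc, Fin.sum_univ_castSucc]
  have h1 : ∀ j : Fin d,
      eps d (j.castSucc.castSucc) * v j.castSucc.castSucc * w j.castSucc.castSucc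
        = v ⟨(j : ℕ), by have := j.isLt; omega⟩ * w ⟨(j : ℕ), by have := j.isLt; omega⟩ := by
    intro j
    have he : eps d (j.castSucc.castSucc) = 1 := if_pos (by simpa using j.isLt)
    rw [he, one_mul]
    have e : (j.castSucc.castSucc : Fin (d + 2)) = ⟨(j : ℕ), by have := j.isLt; omega⟩ :=
      Fin.eq_of_val_eq (by simp)
    rw [e]
  rw [Finset.sum_congr rfl fun j _ => h1 j]
  have h2 : eps d ((Fin.last d).castSucc) = -1 := if_neg (by simp)
  have h3 : eps d (Fin.last (d + 1)) = -1 := if_neg (by simp)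
  rw [h2, h3]
  have e1 : ((Fin.last d).castSucc : Fin (d + 2)) = ⟨d, by omega⟩ :=
    Fin.eq_of_val_eq (by simp)
  have e2 : (Fin.last (d + 1) : Fin (d + 2)) = ⟨d + 1, by omega⟩ :=
    Fin.eq_of_val_eq (by simp)
  rw [e1, e2, ← Dv]
  ring

lemma quad_eq (v : EuclideanSpace ℝ (Fin (d + 2))) :
    quad d v = Sv d v - v ⟨d, by omega⟩ ^ 2 - v ⟨d + 1, by omega⟩ ^ 2 := by
  rw [quad, bil_eq, Dv_self]; ring

lemma sq_add_sq_of_AdS (v : EuclideanSpace ℝ (Fin (d + 2))) (hv : quad d v = -1) :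
    v ⟨d, by omega⟩ ^ 2 + v ⟨d + 1, by omega⟩ ^ 2 = Nv d v ^ 2 := by
  rw [Nv_sq]
  have := quad_eq v
  linarith [this.symm.trans hv]

lemma cs2 (a b a' b' : ℝ) :
    a * a' + b * b' ≤ Real.sqrt (a ^ 2 + b ^ 2) * Real.sqrt (a' ^ 2 + b' ^ 2) := by
  have h1 : (a * a' + b * b') ^ 2 ≤ (a ^ 2 + b ^ 2) * (a' ^ 2 + b' ^ 2) := by
    nlinarith [sq_nonneg (a * b' - b * a')]
  calc a * a' + b * b' ≤ |a * a' + b * b'| := le_abs_self _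
    _ = Real.sqrt ((a * a' + b * b') ^ 2) := (Real.sqrt_sq_eq_abs _).symm
    _ ≤ Real.sqrt ((a ^ 2 + b ^ 2) * (a' ^ 2 + b' ^ 2)) := Real.sqrt_le_sqrt h1
    _ = _ := Real.sqrt_mul (by positivity) _

lemma key_lower (v w : EuclideanSpace ℝ (Fin (d + 2)))
    (hv : quad d v = -1) (hw : quad d w = -1) :
    Dv d v w ≤ bil d v w + Nv d v * Nv d w := by
  have h1 := cs2 (v ⟨d, by omega⟩) (v ⟨d + 1, by omega⟩) (w ⟨d, by omega⟩)
    (w ⟨d + 1, by omega⟩)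
  have h2 : Real.sqrt (v ⟨d, by omega⟩ ^ 2 + v ⟨d + 1, by omega⟩ ^ 2) = Nv d v := by
    rw [sq_add_sq_of_AdS v hv, Real.sqrt_sq (Nv_pos v).le]
  have h3 : Real.sqrt (w ⟨d, by omega⟩ ^ 2 + w ⟨d + 1, by omega⟩ ^ 2) = Nv d w := by
    rw [sq_add_sq_of_AdS w hw, Real.sqrt_sq (Nv_pos w).le]
  rw [h2, h3] at h1
  have h4 := bil_eq v w
  linarith


lemma abs_coord_le {n : ℕ} (v : EuclideanSpace ℝ (Fin n)) (i : Fin n) : |v i| ≤ ‖v‖ := by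
  rw [EuclideanSpace.norm_eq, ← Real.sqrt_sq_eq_abs]
  apply Real.sqrt_le_sqrt
  have h := Finset.single_le_sum (f := fun j => ‖v j‖ ^ 2)
    (fun j _ => by positivity) (Finset.mem_univ i)
  simpa [Real.norm_eq_abs, sq_abs] using h

lemma abs_coord_sub_le (v w : EuclideanSpace ℝ (Fin (d + 2))) (i : Fin (d + 2)) :
    |v i - w i| ≤ ‖v - w‖ := by
  have h := abs_coord_le (v - w) i
  simpa using h

lemma Sv_le_norm_sq (v : EuclideanSpace ℝ (Fin (d + 2))) : Sv d v ≤ ‖v‖ ^ 2 := by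
  have h : ‖v‖ ^ 2 = ∑ i : Fin (d + 2), v i ^ 2 := by
    rw [EuclideanSpace.norm_eq, Real.sq_sqrt (by positivity)]
    exact Finset.sum_congr rfl fun i _ => by rw [Real.norm_eq_abs, sq_abs]
  rw [h, Fin.sum_univ_castSucc, Fin.sum_univ_castSucc]
  have h2 : Sv d v = ∑ j : Fin d, v j.castSucc.castSucc ^ 2 := by
    apply Finset.sum_congr rfl
    intro j _
    have e : (j.castSucc.castSucc : Fin (d + 2)) = ⟨(j : ℕ), by have := j.isLt; omega⟩ :=
      Fin.eq_of_val_eq (by simp)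
    rw [e]
  rw [h2]
  nlinarith [sq_nonneg (v ((Fin.last d).castSucc)), sq_nonneg (v (Fin.last (d + 1)))]

lemma Nv_le (v : EuclideanSpace ℝ (Fin (d + 2))) (R : ℝ) (hR : 0 ≤ R) (hv : ‖v‖ ≤ R) :
    Nv d v ≤ 1 + R := by
  rw [Nv]
  have h : 1 + Sv d v ≤ (1 + R) ^ 2 := by
    nlinarith [Sv_le_norm_sq v, norm_nonneg v]
  calc Real.sqrt (1 + Sv d v) ≤ Real.sqrt ((1 + R) ^ 2) := Real.sqrt_le_sqrt h
    _ = 1 + R := Real.sqrt_sq (by linarith)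

lemma Nv_sub_le (v w : EuclideanSpace ℝ (Fin (d + 2))) (R : ℝ) (hR : 0 ≤ R)
    (hv : ‖v‖ ≤ R) (hw : ‖w‖ ≤ R) :
    |Nv d v - Nv d w| ≤ R * d * ‖v - w‖ := by
  have hS : |Sv d v - Sv d w| ≤ 2 * R * d * ‖v - w‖ := by
    have h1 : Sv d v - Sv d w = ∑ j : Fin d,
        (v ⟨(j : ℕ), by have := j.isLt; omega⟩ ^ 2
          - w ⟨(j : ℕ), by have := j.isLt; omega⟩ ^ 2) := by
      rw [Sv, Sv, ← Finset.sum_sub_distrib]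
    rw [h1]
    calc |∑ j : Fin d, (v ⟨(j : ℕ), by have := j.isLt; omega⟩ ^ 2
          - w ⟨(j : ℕ), by have := j.isLt; omega⟩ ^ 2)|
        ≤ ∑ j : Fin d, |v ⟨(j : ℕ), by have := j.isLt; omega⟩ ^ 2
          - w ⟨(j : ℕ), by have := j.isLt; omega⟩ ^ 2| := Finset.abs_sum_le_sum_abs _ _
      _ ≤ ∑ _j : Fin d, 2 * R * ‖v - w‖ := by
          apply Finset.sum_le_sum
          intro j _
          set a := v ⟨(j : ℕ), by have := j.isLt; omega⟩ with ha
          set b := w ⟨(j : ℕ), by have := j.isLt; omega⟩ with hb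
          have h2 : |a| ≤ R := le_trans (abs_coord_le v _) hv
          have h3 : |b| ≤ R := le_trans (abs_coord_le w _) hw
          have h4 : |a - b| ≤ ‖v - w‖ := abs_coord_sub_le v w _
          have h5 : a ^ 2 - b ^ 2 = (a - b) * (a + b) := by ring
          rw [h5, abs_mul]
          have h6 : |a + b| ≤ 2 * R := by
            calc |a + b| ≤ |a| + |b| := abs_add_le _ _
              _ ≤ 2 * R := by linarith
          nlinarith [abs_nonneg (a - b), abs_nonneg (a + b)]
      _ = 2 * R * d * ‖v - w‖ := by
          rw [Finset.sum_const, Finset.card_univ, Fintype.card_fin]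
          push_cast; ring
  have h3 : (Nv d v - Nv d w) * (Nv d v + Nv d w) = Sv d v - Sv d w := by
    have e1 := Nv_sq v
    have e2 := Nv_sq w
    nlinarith [e1, e2]
  have h4 : (2 : ℝ) ≤ Nv d v + Nv d w := by linarith [one_le_Nv v, one_le_Nv w]
  have h5 : |Nv d v - Nv d w| * (Nv d v + Nv d w) = |Sv d v - Sv d w| := by
    rw [← h3, abs_mul, abs_of_pos (by linarith : 0 < Nv d v + Nv d w)]
  nlinarith [abs_nonneg (Nv d v - Nv d w)]

lemma proj_comp_bound (v w : EuclideanSpace ℝ (Fin (d + 2))) (R : ℝ) (hR : 1 ≤ R)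
    (hv : ‖v‖ ≤ R) (hw : ‖w‖ ≤ R) (i : Fin (d + 1)) :
    |projSd d v i - projSd d w i| ≤ ((1 + R) + R ^ 2 * d) * ‖v - w‖ := by
  have hN := Nv_pos v
  have hN' := Nv_pos w
  have hNN : 1 ≤ Nv d v * Nv d w := by nlinarith [one_le_Nv v, one_le_Nv w]
  have hex : projSd d v i - projSd d w i
      = (avec d v i * Nv d w - avec d w i * Nv d v) / (Nv d v * Nv d w) := by
    rw [projSd_apply, projSd_apply, div_sub_div _ _ hN.ne' hN'.ne']
    ring
  have ha : |avec d v i - avec d w i| ≤ ‖v - w‖ := by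
    rw [avec, avec]
    by_cases h : (i : ℕ) = 0
    · simp [h, norm_nonneg]
    · simp only [if_neg h]
      exact abs_coord_sub_le v w _
  have ha' : |avec d w i| ≤ R := by
    rw [avec]
    by_cases h : (i : ℕ) = 0
    · simp [h]; linarith
    · simp only [if_neg h]
      exact le_trans (abs_coord_le w _) hw
  have hNle : Nv d w ≤ 1 + R := Nv_le w R (by linarith) hw
  have hNd : |Nv d w - Nv d v| ≤ R * d * ‖v - w‖ := by
    rw [abs_sub_comm]; exact Nv_sub_le v w R (by linarith) hv hw
  have hnum : |avec d v i * Nv d w - avec d w i * Nv d v|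
      ≤ ((1 + R) + R ^ 2 * d) * ‖v - w‖ := by
    have he : avec d v i * Nv d w - avec d w i * Nv d v
        = (avec d v i - avec d w i) * Nv d w + avec d w i * (Nv d w - Nv d v) := by ring
    rw [he]
    calc |(avec d v i - avec d w i) * Nv d w + avec d w i * (Nv d w - Nv d v)|
        ≤ |(avec d v i - avec d w i) * Nv d w| + |avec d w i * (Nv d w - Nv d v)| :=
          abs_add_le _ _
      _ = |avec d v i - avec d w i| * Nv d w + |avec d w i| * |Nv d w - Nv d v| := by
          rw [abs_mul, abs_mul, abs_of_pos hN']
      _ ≤ ‖v - w‖ * (1 + R) + R * (R * d * ‖v - w‖) := by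
          have := abs_nonneg (avec d v i - avec d w i)
          have := abs_nonneg (Nv d w - Nv d v)
          have := norm_nonneg (v - w)
          apply add_le_add
          · exact mul_le_mul ha hNle hN'.le (by positivity)
          · exact mul_le_mul ha' hNd (abs_nonneg _) (by linarith)
      _ = ((1 + R) + R ^ 2 * d) * ‖v - w‖ := by ring
  rw [hex, abs_div, abs_of_pos (by positivity : 0 < Nv d v * Nv d w)]
  calc |avec d v i * Nv d w - avec d w i * Nv d v| / (Nv d v * Nv d w)
      ≤ |avec d v i * Nv d w - avec d w i * Nv d v| / 1 := by
        apply div_le_div_of_nonneg_left (abs_nonneg _) (by positivity) hNN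
        |>.trans_eq rfl
    _ = |avec d v i * Nv d w - avec d w i * Nv d v| := div_one _
    _ ≤ _ := hnum

lemma le_of_sq_le_sq' (a b : ℝ) (ha : 0 ≤ a) (hb : 0 ≤ b) (h : a ^ 2 ≤ b ^ 2) : a ≤ b := by
  nlinarith

lemma proj_norm_upper (v w : EuclideanSpace ℝ (Fin (d + 2))) (R : ℝ) (hR : 1 ≤ R)
    (hv : ‖v‖ ≤ R) (hw : ‖w‖ ≤ R) :
    ‖projSd d v - projSd d w‖ ≤ ((d : ℝ) + 1) * ((1 + R) + R ^ 2 * d) * ‖v - w‖ := by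
  set C : ℝ := (1 + R) + R ^ 2 * d with hC
  have hC0 : 0 < C := by positivity
  have hsq : ‖projSd d v - projSd d w‖ ^ 2 ≤ ((d : ℝ) + 1) * (C * ‖v - w‖) ^ 2 := by
    have h1 : ‖projSd d v - projSd d w‖ ^ 2
        = ∑ i : Fin (d + 1), (projSd d v i - projSd d w i) ^ 2 := by
      rw [norm_sq_eq_sum]
      exact Finset.sum_congr rfl fun i _ => by simp
    rw [h1]
    calc ∑ i : Fin (d + 1), (projSd d v i - projSd d w i) ^ 2
        ≤ ∑ _i : Fin (d + 1), (C * ‖v - w‖) ^ 2 := by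
          apply Finset.sum_le_sum
          intro i _
          have h2 := proj_comp_bound v w R hR hv hw i
          rw [← sq_abs (projSd d v i - projSd d w i)]
          exact pow_le_pow_left₀ (abs_nonneg _) h2 2
      _ = ((d : ℝ) + 1) * (C * ‖v - w‖) ^ 2 := by
          rw [Finset.sum_const, Finset.card_univ, Fintype.card_fin]
          push_cast; ring
  apply le_of_sq_le_sq' _ _ (norm_nonneg _)
    (mul_nonneg (mul_nonneg (by positivity) hC0.le) (norm_nonneg _))
  calc ‖projSd d v - projSd d w‖ ^ 2 ≤ ((d : ℝ) + 1) * (C * ‖v - w‖) ^ 2 := hsq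
    _ ≤ (((d : ℝ) + 1) * C * ‖v - w‖) ^ 2 := by
        have hd1 : (1 : ℝ) ≤ (d : ℝ) + 1 := by linarith [Nat.cast_nonneg (α := ℝ) d]
        nlinarith [sq_nonneg (C * ‖v - w‖)]


end AdSAux

open AdSAux in
set_option maxHeartbeats 1000000 in
/-- for a spacelike immersion i : H → AdS^{d+1}, the composed map
p ↦ π(i(p)) into S^d_+ ⊂ ℝ^{d+1} is locally bi-Lipschitz. -/
theorem proj_comp_locally_biLipschitz (d : ℕ) (hd : 1 ≤ d)
    {H : Type*} [MetricSpace H]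
    (i : H → EuclideanSpace ℝ (Fin (d + 2)))
    (hAdS : ∀ p, quad d (i p) = -1)
    (hsp : IsSpacelikeImmersion d i) :
    ∀ p : H, ∃ U ∈ nhds p, ∃ k K : ℝ, 0 < k ∧ k ≤ K ∧
      ∀ p' ∈ U, ∀ p'' ∈ U,
        k * dist p' p'' ≤ ‖projSd d (i p') - projSd d (i p'')‖ ∧
        ‖projSd d (i p') - projSd d (i p'')‖ ≤ K * dist p' p'' := by
  intro p
  obtain ⟨hLL, hSP⟩ := hsp
  obtain ⟨K₀, U₁, hU₁, hLip⟩ := hLL p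
  obtain ⟨U₂, hU₂, c, hc, hbil⟩ := hSP p
  set R : ℝ := ‖i p‖ + (K₀ : ℝ) + 1 with hRdef
  have hR1 : 1 ≤ R := by
    have := norm_nonneg (i p)
    have := K₀.coe_nonneg
    rw [hRdef]; linarith
  set U := U₁ ∩ U₂ ∩ Metric.ball p 1 with hUdef
  have hUn : U ∈ nhds p :=
    Filter.inter_mem (Filter.inter_mem hU₁ hU₂) (Metric.ball_mem_nhds p one_pos)
  have hpU₁ : p ∈ U₁ := mem_of_mem_nhds hU₁
  have hbound : ∀ p' ∈ U, ‖i p'‖ ≤ R := by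
    intro p' hp'
    have h1 : dist (i p') (i p) ≤ (K₀ : ℝ) * dist p' p := hLip.dist_le_mul p' hp'.1.1 p hpU₁
    have h2 : dist p' p ≤ 1 := le_of_lt (by simpa [Metric.mem_ball] using hp'.2)
    have h3 : ‖i p'‖ ≤ ‖i p‖ + dist (i p') (i p) := by
      rw [dist_eq_norm]
      have := norm_sub_norm_le (i p') (i p)
      linarith [abs_le.mp (abs_norm_sub_norm_le (i p') (i p))]
    have h4 : (K₀ : ℝ) * dist p' p ≤ (K₀ : ℝ) * 1 :=
      mul_le_mul_of_nonneg_left h2 K₀.coe_nonneg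
    rw [hRdef]; linarith
  set M : ℝ := 1 + R with hMdef
  have hM1 : 2 ≤ M := by rw [hMdef]; linarith
  have hMpos : 0 < M := by linarith
  have hMN : ∀ p' ∈ U, Nv d (i p') ≤ M := fun p' h => Nv_le (i p') R (by linarith) (hbound p' h)
  set k : ℝ := Real.sqrt (2 * c) / M with hkdef
  have hk : 0 < k := div_pos (Real.sqrt_pos.mpr (by linarith)) hMpos
  set C : ℝ := (1 + R) + R ^ 2 * d with hCdef
  have hC0 : 0 < C := by positivity
  set Kup : ℝ := ((d : ℝ) + 1) * C * (K₀ : ℝ) with hKup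
  have hKup0 : 0 ≤ Kup := by
    apply mul_nonneg (mul_nonneg _ hC0.le) K₀.coe_nonneg
    positivity
  refine ⟨U, hUn, k, k + Kup, hk, by linarith, ?_⟩
  intro p' hp' p'' hp''
  have hN1 := one_le_Nv (i p')
  have hN2 := one_le_Nv (i p'')
  have hM1' := hMN p' hp'
  have hM2' := hMN p'' hp''
  constructor
  · -- lower bound
    have hb := hbil p' hp'.1.2 p'' hp''.1.2
    have hsq := norm_sub_sq_formula (d := d) (i p') (i p'')
    have hkey := key_lower (i p') (i p'') (hAdS p') (hAdS p'')
    set N : ℝ := Nv d (i p') with hN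
    set N' : ℝ := Nv d (i p'') with hN'
    set t : ℝ := dist p' p'' with ht
    have ht0 : 0 ≤ t := dist_nonneg
    have hP : 0 < N * N' := by nlinarith
    have hPM : N * N' ≤ M ^ 2 := by nlinarith
    have h5 : 1 + Dv d (i p') (i p'') ≤ N * N' - c * t ^ 2 := by linarith
    have h6 : 2 * c * t ^ 2 / (N * N') ≤ 2 - 2 * ((1 + Dv d (i p') (i p'')) / (N * N')) := by
      rw [div_le_iff₀ hP] at *
      have h7 : (2 - 2 * ((1 + Dv d (i p') (i p'')) / (N * N'))) * (N * N')
          = 2 * (N * N') - 2 * (1 + Dv d (i p') (i p'')) := by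
        field_simp
      rw [h7]
      nlinarith
    have h8 : 2 * c * t ^ 2 / M ^ 2 ≤ 2 * c * t ^ 2 / (N * N') :=
      div_le_div_of_nonneg_left (by positivity) hP hPM
    have hk2 : k ^ 2 = 2 * c / M ^ 2 := by
      rw [hkdef, div_pow, Real.sq_sqrt (by linarith)]
    have h9 : (k * t) ^ 2 ≤ ‖projSd d (i p') - projSd d (i p'')‖ ^ 2 := by
      rw [hsq]
      have : (k * t) ^ 2 = 2 * c * t ^ 2 / M ^ 2 := by
        rw [mul_pow, hk2]; ring
      linarith
    exact le_of_sq_le_sq' _ _ (by positivity) (norm_nonneg _) h9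
  · -- upper bound
    have h1 : ‖projSd d (i p') - projSd d (i p'')‖ ≤ ((d : ℝ) + 1) * C * ‖i p' - i p''‖ :=
      proj_norm_upper (i p') (i p'') R hR1 (hbound p' hp') (hbound p'' hp'')
    have h2 : ‖i p' - i p''‖ ≤ (K₀ : ℝ) * dist p' p'' := by
      rw [← dist_eq_norm]
      exact hLip.dist_le_mul p' hp'.1.1 p'' hp''.1.1
    have h3 : ((d : ℝ) + 1) * C * ‖i p' - i p''‖ ≤ Kup * dist p' p'' := by
      rw [hKup]
      have hnn : (0 : ℝ) ≤ ((d : ℝ) + 1) * C :=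
        mul_nonneg (by positivity) hC0.le
      calc ((d : ℝ) + 1) * C * ‖i p' - i p''‖
          ≤ ((d : ℝ) + 1) * C * ((K₀ : ℝ) * dist p' p'') :=
            mul_le_mul_of_nonneg_left h2 hnn
        _ = ((d : ℝ) + 1) * C * (K₀ : ℝ) * dist p' p'' := by ring
    have h4 : 0 ≤ k * dist p' p'' := mul_nonneg hk.le dist_nonneg
    calc ‖projSd d (i p') - projSd d (i p'')‖ ≤ Kup * dist p' p'' := le_trans h1 h3
      _ ≤ (k + Kup) * dist p' p'' := by nlinarith [dist_nonneg (x := p') (y := p'')]
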